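/- Under the i.i.d. bounded-features assumption, with α ∈ (0, 1/c²] and the products Γ_{m:k} = Π_{i=m}^{k}(I − αX_iX_iᵀ), it holds for all 1 ≤ m ≤ k and u ∈ ℝ^d that E[‖Γ_{m:k}u‖²]^{1/2} ≤ exp(−αa(k−m+1)/2)‖u‖. -/

import Mathlib

open MeasureTheory Matrix ProbabilityTheory

noncomputable def vnorm {d : ℕ} (v : Fin d → ℝ) : ℝ := Real.sqrt (∑ i, v i ^ 2)

/-- The ordered product `Γ_{m:k} = (I − αX_kX_kᵀ)···(I − αX_mX_mᵀ)`, equal to `I` when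
`m > k`. -/
noncomputable def prodGamma {d : ℕ} (α : ℝ) (Xs : ℕ → Fin d → ℝ) (m k : ℕ) :
    Matrix (Fin d) (Fin d) ℝ :=
  ((List.range (k + 1 - m)).map (fun j =>
      (1 : Matrix (Fin d) (Fin d) ℝ) - α • vecMulVec (Xs (k - j)) (Xs (k - j)))).prod

instance matrixMS {d : ℕ} : MeasurableSpace (Matrix (Fin d) (Fin d) ℝ) :=
  inferInstanceAs (MeasurableSpace (Fin d → Fin d → ℝ))

section Aux

variable {d : ℕ}

lemma vnorm_nonneg' (v : Fin d → ℝ) : 0 ≤ vnorm v := Real.sqrt_nonneg _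

lemma vnorm_sq (v : Fin d → ℝ) : vnorm v ^ 2 = ∑ i, v i ^ 2 :=
  Real.sq_sqrt (Finset.sum_nonneg fun _ _ => sq_nonneg _)

lemma abs_le_vnorm (v : Fin d → ℝ) (i : Fin d) : |v i| ≤ vnorm v := by
  rw [← Real.sqrt_sq_eq_abs]
  exact Real.sqrt_le_sqrt
    (Finset.single_le_sum (f := fun i => v i ^ 2) (fun _ _ => sq_nonneg _) (Finset.mem_univ i))

lemma one_sub_mulVec (α : ℝ) (x w : Fin d → ℝ) (i : Fin d) :
    (((1 : Matrix (Fin d) (Fin d) ℝ) - α • vecMulVec x x) *ᵥ w) i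
      = w i - α * (x ⬝ᵥ w) * x i := by
  have h : ((vecMulVec x x) *ᵥ w) i = x i * (x ⬝ᵥ w) := by
    simp [Matrix.mulVec, dotProduct, vecMulVec_apply, Finset.mul_sum, mul_assoc]
  rw [Matrix.sub_mulVec, Matrix.smul_mulVec, Matrix.one_mulVec]
  simp [h]
  ring

lemma contract_sq {c α : ℝ} (hα : 0 < α) (hc2 : α * c ^ 2 ≤ 1) (x w : Fin d → ℝ)
    (hx : vnorm x ≤ c) :
    vnorm (((1 : Matrix (Fin d) (Fin d) ℝ) - α • vecMulVec x x) *ᵥ w) ^ 2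
      ≤ vnorm w ^ 2 - α * (x ⬝ᵥ w) ^ 2 := by
  have hx2 : ∑ i, x i ^ 2 ≤ c ^ 2 := by
    have h1 := vnorm_sq x
    nlinarith [vnorm_nonneg' x]
  set s := x ⬝ᵥ w with hs
  have hsum : ∑ i, x i * w i = s := rfl
  have h1 : ∀ i : Fin d, (((1 : Matrix (Fin d) (Fin d) ℝ) - α • vecMulVec x x) *ᵥ w) i ^ 2
      = w i ^ 2 - (2*α*s) * (x i * w i) + (α^2*s^2) * x i ^ 2 := fun i => by
    rw [one_sub_mulVec]; ring
  have hexp : vnorm (((1 : Matrix (Fin d) (Fin d) ℝ) - α • vecMulVec x x) *ᵥ w) ^ 2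
      = (∑ i, w i ^ 2) - 2 * α * s ^ 2 + α ^ 2 * s ^ 2 * ∑ i, x i ^ 2 := by
    rw [vnorm_sq, Finset.sum_congr rfl fun i _ => h1 i, Finset.sum_add_distrib,
      Finset.sum_sub_distrib, ← Finset.mul_sum, ← Finset.mul_sum, hsum]
    ring
  rw [hexp, vnorm_sq]
  nlinarith [sq_nonneg s, mul_le_mul_of_nonneg_left hx2
      (mul_nonneg (sq_nonneg α) (sq_nonneg s) : (0:ℝ) ≤ α^2*s^2),
    mul_le_mul_of_nonneg_left hc2 (mul_nonneg hα.le (sq_nonneg s))]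

lemma contract_norm {c α : ℝ} (hα : 0 < α) (hc2 : α * c ^ 2 ≤ 1) (x w : Fin d → ℝ)
    (hx : vnorm x ≤ c) :
    vnorm (((1 : Matrix (Fin d) (Fin d) ℝ) - α • vecMulVec x x) *ᵥ w) ≤ vnorm w := by
  unfold vnorm
  apply Real.sqrt_le_sqrt
  have h := contract_sq hα hc2 x w hx
  rw [vnorm_sq, vnorm_sq] at h
  nlinarith [mul_nonneg hα.le (sq_nonneg (x ⬝ᵥ w))]

lemma prodGamma_base (α : ℝ) (Xs : ℕ → Fin d → ℝ) (m : ℕ) :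
    prodGamma α Xs (m + 1) m = 1 := by
  simp [prodGamma]

lemma prodGamma_succ (α : ℝ) (Xs : ℕ → Fin d → ℝ) {m k : ℕ} (h : m ≤ k + 1) :
    prodGamma α Xs m (k + 1)
      = ((1 : Matrix (Fin d) (Fin d) ℝ) - α • vecMulVec (Xs (k + 1)) (Xs (k + 1)))
        * prodGamma α Xs m k := by
  unfold prodGamma
  have h1 : k + 1 + 1 - m = (k + 1 - m) + 1 := by omega
  rw [h1, List.range_succ_eq_map, List.map_cons, List.prod_cons, List.map_map]
  simp only [Nat.sub_zero]
  congr 2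
  apply List.map_congr_left
  intro j _
  simp [Function.comp, Nat.succ_sub_succ]

lemma prodGamma_congr (α : ℝ) {Xs Ys : ℕ → Fin d → ℝ} (m k : ℕ)
    (h : ∀ t, t ≤ k → Xs t = Ys t) : prodGamma α Xs m k = prodGamma α Ys m k := by
  unfold prodGamma
  congr 1
  apply List.map_congr_left
  intro j _
  rw [h (k - j) (Nat.sub_le _ _)]

lemma measurable_matrix_mul {γ : Type*} [MeasurableSpace γ]
    {A B : γ → Matrix (Fin d) (Fin d) ℝ} (hA : Measurable A) (hB : Measurable B) :
    Measurable fun x => A x * B x := by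
  apply measurable_pi_lambda
  intro i
  apply measurable_pi_lambda
  intro j
  simp only [Matrix.mul_apply]
  exact Finset.measurable_sum _ fun l _ => (hA.eval.eval).mul (hB.eval.eval)

lemma measurable_prodGamma (α : ℝ) (m k : ℕ) :
    Measurable fun Xs : ℕ → Fin d → ℝ => prodGamma α Xs m k := by
  unfold prodGamma
  generalize k + 1 - m = n
  have hx : ∀ (t : ℕ) (i : Fin d), Measurable fun Xs : ℕ → Fin d → ℝ => Xs t i :=
    fun t i => (measurable_pi_apply i).comp (measurable_pi_apply t)
  have hfac : ∀ t : ℕ, Measurable fun Xs : ℕ → Fin d → ℝ =>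
      (1 : Matrix (Fin d) (Fin d) ℝ) - α • vecMulVec (Xs t) (Xs t) := by
    intro t
    apply measurable_pi_lambda
    intro i
    apply measurable_pi_lambda
    intro j
    simp only [Matrix.sub_apply, Matrix.smul_apply, vecMulVec_apply, smul_eq_mul]
    exact measurable_const.sub (measurable_const.mul ((hx t i).mul (hx t j)))
  induction n with
  | zero => simpa using measurable_const
  | succ n ih =>
      simp only [List.range_succ, List.map_append, List.prod_append, List.map_cons,
        List.map_nil, List.prod_cons, List.prod_nil, mul_one]
      exact measurable_matrix_mul ih (hfac (k - n))

lemma measurable_mulVec {γ : Type*} [MeasurableSpace γ]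
    {A : γ → Matrix (Fin d) (Fin d) ℝ} (hA : Measurable A) (u : Fin d → ℝ) :
    Measurable fun x => (A x) *ᵥ u := by
  apply measurable_pi_lambda
  intro i
  simp only [Matrix.mulVec, dotProduct]
  exact Finset.measurable_sum _ fun j _ => (hA.eval.eval).mul_const (u j)

lemma measurable_vnorm_comp {γ : Type*} [MeasurableSpace γ] {V : γ → Fin d → ℝ}
    (hV : Measurable V) : Measurable fun x => vnorm (V x) := by
  unfold vnorm
  exact Real.continuous_sqrt.measurable.comp
    (Finset.measurable_sum _ fun i _ => (hV.eval).pow_const 2)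

lemma integrable_of_ae_bdd {Ω : Type*} [MeasurableSpace Ω] {μ : Measure Ω}
    [IsFiniteMeasure μ] {f : Ω → ℝ} (hf : Measurable f) {C : ℝ}
    (h : ∀ᵐ ω ∂μ, |f ω| ≤ C) : Integrable f μ :=
  Integrable.mono' (integrable_const C) hf.aestronglyMeasurable
    (by filter_upwards [h] with ω hω; simpa using hω)

end Aux

set_option maxHeartbeats 2000000 in
/-- **Statement 9.** For i.i.d. `X_k` with `‖X_k‖ ≤ c` a.s. and `E[X₁X₁ᵀ] = Φ` positive
definite with `λ_min(Φ) = a > 0`, and `0 < α ≤ 1/c²`, we have for `1 ≤ m ≤ k`: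
`E[‖Γ_{m:k}u‖²]^{1/2} ≤ exp(−αa(k−m+1)/2)‖u‖`. -/
theorem stmt_10 {d : ℕ} (c a α : ℝ) (hc : 0 < c) (ha : 0 < a)
    (hα : 0 < α) (hα' : α ≤ 1 / c ^ 2)
    (Φ : Matrix (Fin d) (Fin d) ℝ) (hΦpd : Φ.PosDef)
    (hmin : ∀ u : Fin d → ℝ, a * vnorm u ^ 2 ≤ u ⬝ᵥ Φ.mulVec u)
    {Ω : Type*} [MeasurableSpace Ω] (μ : Measure Ω) [IsProbabilityMeasure μ]
    (X : ℕ → Ω → Fin d → ℝ) (hXmeas : ∀ k, Measurable (X k))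
    (hindep : iIndepFun X μ)
    (hident : ∀ k, IdentDistrib (X k) (X 1) μ μ)
    (hXbdd : ∀ k, ∀ᵐ ω ∂μ, vnorm (X k ω) ≤ c)
    (hXΦ : ∀ i j, ∫ ω, X 1 ω i * X 1 ω j ∂μ = Φ i j) :
    ∀ m k : ℕ, 1 ≤ m → m ≤ k → ∀ u : Fin d → ℝ,
      Real.sqrt (∫ ω, vnorm ((prodGamma α (fun i => X i ω) m k).mulVec u) ^ 2 ∂μ)
        ≤ Real.exp (-(α * a * (k - m + 1 : ℕ)) / 2) * vnorm u := by
  have hc2 : α * c ^ 2 ≤ 1 := (le_div_iff₀ (pow_pos hc 2)).mp hα'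
  have hXt : ∀ (t : ℕ) (i : Fin d), Measurable fun ω => X t ω i :=
    fun t i => (hXmeas t).eval
  have hmeasΓ : ∀ m k : ℕ, Measurable fun ω => prodGamma α (fun t => X t ω) m k :=
    fun m k => (measurable_prodGamma α m k).comp (measurable_pi_lambda _ hXmeas)
  have hmeasV : ∀ (m k : ℕ) (u : Fin d → ℝ),
      Measurable fun ω => (prodGamma α (fun t => X t ω) m k) *ᵥ u :=
    fun m k u => measurable_mulVec (hmeasΓ m k) u
  -- a.e. bound on the norm of Γ u
  have haeb : ∀ (m' n : ℕ) (u : Fin d → ℝ),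
      ∀ᵐ ω ∂μ, vnorm ((prodGamma α (fun t => X t ω) (m' + 1) (m' + n)) *ᵥ u) ≤ vnorm u := by
    intro m' n u
    induction n with
    | zero =>
        filter_upwards with ω
        simp [prodGamma_base]
    | succ n ih =>
        filter_upwards [ih, hXbdd (m' + n + 1)] with ω h1 h2
        rw [show m' + (n + 1) = (m' + n) + 1 from rfl,
          prodGamma_succ α _ (by omega), ← mulVec_mulVec]
        exact le_trans (contract_norm hα hc2 _ _ h2) h1
  -- integrability of the squared norms
  have hIntN : ∀ (m' n : ℕ) (u : Fin d → ℝ),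
      Integrable (fun ω => vnorm ((prodGamma α (fun t => X t ω) (m' + 1) (m' + n)) *ᵥ u) ^ 2) μ := by
    intro m' n u
    apply integrable_of_ae_bdd ((measurable_vnorm_comp (hmeasV _ _ u)).pow_const 2)
      (C := vnorm u ^ 2)
    filter_upwards [haeb m' n u] with ω h
    rw [abs_of_nonneg (pow_nonneg (vnorm_nonneg' _) 2)]
    exact pow_le_pow_left₀ (vnorm_nonneg' _) h 2
  -- the key inductive estimate
  have key : ∀ (m' : ℕ) (u : Fin d → ℝ) (n : ℕ),
      ∫ ω, vnorm ((prodGamma α (fun t => X t ω) (m' + 1) (m' + n)) *ᵥ u) ^ 2 ∂μ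
        ≤ Real.exp (-(α * a * n)) * vnorm u ^ 2 := by
    intro m' u n
    induction n with
    | zero => simp [prodGamma_base]
    | succ n ih =>
      have hVmeas : Measurable fun ω => (prodGamma α (fun t => X t ω) (m' + 1) (m' + n)) *ᵥ u :=
        hmeasV _ _ u
      have hVi : ∀ i : Fin d,
          Measurable fun ω => ((prodGamma α (fun t => X t ω) (m' + 1) (m' + n)) *ᵥ u) i :=
        fun i => hVmeas.eval
      have hVib : ∀ i : Fin d, ∀ᵐ ω ∂μ,
          |((prodGamma α (fun t => X t ω) (m' + 1) (m' + n)) *ᵥ u) i| ≤ vnorm u := by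
        intro i
        filter_upwards [haeb m' n u] with ω h
        exact le_trans (abs_le_vnorm _ i) h
      have hXib : ∀ (t : ℕ) (i : Fin d), ∀ᵐ ω ∂μ, |X t ω i| ≤ c := by
        intro t i
        filter_upwards [hXbdd t] with ω h
        exact le_trans (abs_le_vnorm _ i) h
      have hIntVij : ∀ i j : Fin d, Integrable (fun ω =>
          ((prodGamma α (fun t => X t ω) (m' + 1) (m' + n)) *ᵥ u) i *
          ((prodGamma α (fun t => X t ω) (m' + 1) (m' + n)) *ᵥ u) j) μ := by
        intro i j
        apply integrable_of_ae_bdd ((hVi i).mul (hVi j)) (C := vnorm u * vnorm u)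
        filter_upwards [hVib i, hVib j] with ω h1 h2
        rw [Pi.mul_apply, abs_mul]
        exact mul_le_mul h1 h2 (abs_nonneg _) (vnorm_nonneg' _)
      have hIntXV : ∀ i j : Fin d, Integrable (fun ω =>
          (X (m' + n + 1) ω i * X (m' + n + 1) ω j) *
          (((prodGamma α (fun t => X t ω) (m' + 1) (m' + n)) *ᵥ u) i *
           ((prodGamma α (fun t => X t ω) (m' + 1) (m' + n)) *ᵥ u) j)) μ := by
        intro i j
        apply integrable_of_ae_bdd (((hXt _ i).mul (hXt _ j)).mul ((hVi i).mul (hVi j)))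
          (C := (c * c) * (vnorm u * vnorm u))
        filter_upwards [hVib i, hVib j, hXib (m' + n + 1) i, hXib (m' + n + 1) j]
          with ω h1 h2 h3 h4
        simp only [Pi.mul_apply]
        rw [abs_mul, abs_mul, abs_mul]
        have h5 := mul_le_mul h3 h4 (abs_nonneg _) hc.le
        have h6 := mul_le_mul h1 h2 (abs_nonneg _) (vnorm_nonneg' _)
        exact mul_le_mul h5 h6 (mul_nonneg (abs_nonneg _) (abs_nonneg _))
          (mul_nonneg hc.le hc.le)
      have hs2eq : ∀ ω : Ω,
          (X (m' + n + 1) ω ⬝ᵥ ((prodGamma α (fun t => X t ω) (m' + 1) (m' + n)) *ᵥ u)) ^ 2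
          = ∑ i, ∑ j, (X (m' + n + 1) ω i * X (m' + n + 1) ω j) *
              (((prodGamma α (fun t => X t ω) (m' + 1) (m' + n)) *ᵥ u) i *
               ((prodGamma α (fun t => X t ω) (m' + 1) (m' + n)) *ᵥ u) j) := by
        intro ω
        rw [pow_two, dotProduct, Finset.sum_mul_sum]
        exact Finset.sum_congr rfl fun i _ => Finset.sum_congr rfl fun j _ => by ring
      have hInts2 : Integrable (fun ω =>
          (X (m' + n + 1) ω ⬝ᵥ ((prodGamma α (fun t => X t ω) (m' + 1) (m' + n)) *ᵥ u)) ^ 2) μ := by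
        refine Integrable.congr ?_ (ae_of_all _ fun ω => (hs2eq ω).symm)
        exact integrable_finset_sum _ fun i _ => integrable_finset_sum _ fun j _ => hIntXV i j
      -- pointwise contraction step
      have hstep1 : ∫ ω, vnorm ((prodGamma α (fun t => X t ω) (m' + 1) (m' + (n + 1))) *ᵥ u) ^ 2 ∂μ
          ≤ ∫ ω, (vnorm ((prodGamma α (fun t => X t ω) (m' + 1) (m' + n)) *ᵥ u) ^ 2
              - α * (X (m' + n + 1) ω ⬝ᵥ ((prodGamma α (fun t => X t ω) (m' + 1) (m' + n)) *ᵥ u)) ^ 2) ∂μ := by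
        apply integral_mono_ae (hIntN m' (n + 1) u) ((hIntN m' n u).sub (hInts2.const_mul α))
        filter_upwards [hXbdd (m' + n + 1)] with ω hb
        rw [show m' + (n + 1) = (m' + n) + 1 from rfl,
          prodGamma_succ α _ (by omega), ← mulVec_mulVec]
        exact contract_sq hα hc2 _ _ hb
      rw [integral_sub (hIntN m' n u) (hInts2.const_mul α), integral_const_mul] at hstep1
      -- independence
      have hindepij : ∀ i j : Fin d, IndepFun
          (fun ω => X (m' + n + 1) ω i * X (m' + n + 1) ω j)
          (fun ω => ((prodGamma α (fun t => X t ω) (m' + 1) (m' + n)) *ᵥ u) i *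
                    ((prodGamma α (fun t => X t ω) (m' + 1) (m' + n)) *ᵥ u) j) μ := by
        intro i j
        have hd : Disjoint ({m' + n + 1} : Finset ℕ) (Finset.range (m' + n + 1)) := by
          simp [Finset.disjoint_singleton_left]
        have hbase := hindep.indepFun_finset {m' + n + 1} (Finset.range (m' + n + 1)) hd hXmeas
        have hmem : m' + n + 1 ∈ ({m' + n + 1} : Finset ℕ) := Finset.mem_singleton_self _
        set φ : (({m' + n + 1} : Finset ℕ) → Fin d → ℝ) → ℝ :=
          fun y => y ⟨m' + n + 1, hmem⟩ i * y ⟨m' + n + 1, hmem⟩ j with hφdef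
        set E : ((Finset.range (m' + n + 1) : Finset ℕ) → Fin d → ℝ) → ℕ → Fin d → ℝ :=
          fun y t => if h : t ∈ Finset.range (m' + n + 1) then y ⟨t, h⟩ else 0 with hEdef
        set ψ : ((Finset.range (m' + n + 1) : Finset ℕ) → Fin d → ℝ) → ℝ :=
          fun y => ((prodGamma α (E y) (m' + 1) (m' + n)) *ᵥ u) i *
                   ((prodGamma α (E y) (m' + 1) (m' + n)) *ᵥ u) j with hψdef
        have hφm : Measurable φ := Measurable.mul (f := fun y : ({m' + n + 1} : Finset ℕ) → Fin d → ℝ => y ⟨m' + n + 1, hmem⟩ i) (g := fun y : ({m' + n + 1} : Finset ℕ) → Fin d → ℝ => y ⟨m' + n + 1, hmem⟩ j) ((measurable_pi_apply _).eval) ((measurable_pi_apply _).eval)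
        have hEm : Measurable E := by
          apply measurable_pi_lambda
          intro t
          by_cases h : t ∈ Finset.range (m' + n + 1)
          · have heq : (fun y : ((Finset.range (m' + n + 1) : Finset ℕ)) → Fin d → ℝ => E y t)
                = fun y => y ⟨t, h⟩ := by
              funext y; simp only [hEdef]; rw [dif_pos h]
            rw [heq]; exact measurable_pi_apply _
          · have heq : (fun y : ((Finset.range (m' + n + 1) : Finset ℕ)) → Fin d → ℝ => E y t)
                = fun _ => 0 := by
              funext y; simp only [hEdef]; rw [dif_neg h]
            rw [heq]; exact measurable_const
        have hψm : Measurable ψ := by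
          have h1 := measurable_mulVec ((measurable_prodGamma α (m' + 1) (m' + n)).comp hEm) u
          exact (h1.eval).mul (h1.eval)
        have hcomp := hbase.comp hφm hψm
        have hfun1 : (fun ω => X (m' + n + 1) ω i * X (m' + n + 1) ω j)
            = φ ∘ (fun ω (t : ({m' + n + 1} : Finset ℕ)) => X t ω) := rfl
        have hfun2 : (fun ω => ((prodGamma α (fun t => X t ω) (m' + 1) (m' + n)) *ᵥ u) i *
              ((prodGamma α (fun t => X t ω) (m' + 1) (m' + n)) *ᵥ u) j)
            = ψ ∘ (fun ω (t : (Finset.range (m' + n + 1) : Finset ℕ)) => X t ω) := by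
          funext ω
          have hE : prodGamma α (E (fun t : (Finset.range (m' + n + 1) : Finset ℕ) => X t ω))
              (m' + 1) (m' + n) = prodGamma α (fun t => X t ω) (m' + 1) (m' + n) := by
            apply prodGamma_congr
            intro t ht
            have hmem' : t ∈ Finset.range (m' + n + 1) := Finset.mem_range.mpr (by omega)
            show E (fun s : (Finset.range (m' + n + 1) : Finset ℕ) => X (↑s) ω) t = X t ω
            simp only [hEdef]
            rw [dif_pos hmem']
          simp only [Function.comp, hψdef, hE]
        rw [hfun1, hfun2]
        exact hcomp
      -- second moments of X
      have hEX : ∀ i j : Fin d, ∫ ω, X (m' + n + 1) ω i * X (m' + n + 1) ω j ∂μ = Φ i j := by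
        intro i j
        have hid := (hident (m' + n + 1)).comp
          (u := fun y : Fin d → ℝ => y i * y j) ((measurable_pi_apply i).mul (measurable_pi_apply j))
        exact hid.integral_eq.trans (hXΦ i j)
      -- compute the integral of the dot-product square
      have hs2 : ∫ ω, (X (m' + n + 1) ω ⬝ᵥ ((prodGamma α (fun t => X t ω) (m' + 1) (m' + n)) *ᵥ u)) ^ 2 ∂μ
          = ∑ i, ∑ j, Φ i j * ∫ ω, ((prodGamma α (fun t => X t ω) (m' + 1) (m' + n)) *ᵥ u) i *
              ((prodGamma α (fun t => X t ω) (m' + 1) (m' + n)) *ᵥ u) j ∂μ := by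
        rw [integral_congr_ae (ae_of_all _ hs2eq)]
        rw [integral_finset_sum _ fun i _ => integrable_finset_sum _ fun j _ => hIntXV i j]
        refine Finset.sum_congr rfl fun i _ => ?_
        rw [integral_finset_sum _ fun j _ => hIntXV i j]
        refine Finset.sum_congr rfl fun j _ => ?_
        have hmul := (hindepij i j).integral_mul_eq_mul_integral (((hXt _ i).mul (hXt _ j)).aestronglyMeasurable)
          (((hVi i).mul (hVi j)).aestronglyMeasurable)
        simp only [Pi.mul_apply] at hmul
        rw [hmul, hEX i j]
      -- relate to the quadratic form of Φ
      have hdotEq : ∀ ω : Ω, ((prodGamma α (fun t => X t ω) (m' + 1) (m' + n)) *ᵥ u) ⬝ᵥ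
            Φ *ᵥ ((prodGamma α (fun t => X t ω) (m' + 1) (m' + n)) *ᵥ u)
          = ∑ i, ∑ j, Φ i j * (((prodGamma α (fun t => X t ω) (m' + 1) (m' + n)) *ᵥ u) i *
              ((prodGamma α (fun t => X t ω) (m' + 1) (m' + n)) *ᵥ u) j) := by
        intro ω
        generalize ((prodGamma α (fun t => X t ω) (m' + 1) (m' + n)) *ᵥ u) = v
        simp only [dotProduct, Matrix.mulVec, Finset.mul_sum]
        exact Finset.sum_congr rfl fun i _ => Finset.sum_congr rfl fun j _ => by ring
      have hIntΦV : Integrable (fun ω =>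
          ((prodGamma α (fun t => X t ω) (m' + 1) (m' + n)) *ᵥ u) ⬝ᵥ
            Φ *ᵥ ((prodGamma α (fun t => X t ω) (m' + 1) (m' + n)) *ᵥ u)) μ := by
        refine Integrable.congr ?_ (ae_of_all _ fun ω => (hdotEq ω).symm)
        exact integrable_finset_sum _ fun i _ => integrable_finset_sum _ fun j _ =>
          (hIntVij i j).const_mul _
      have hΦV : ∑ i, ∑ j, Φ i j * ∫ ω, ((prodGamma α (fun t => X t ω) (m' + 1) (m' + n)) *ᵥ u) i *
              ((prodGamma α (fun t => X t ω) (m' + 1) (m' + n)) *ᵥ u) j ∂μ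
          = ∫ ω, ((prodGamma α (fun t => X t ω) (m' + 1) (m' + n)) *ᵥ u) ⬝ᵥ
              Φ *ᵥ ((prodGamma α (fun t => X t ω) (m' + 1) (m' + n)) *ᵥ u) ∂μ := by
        rw [integral_congr_ae (ae_of_all _ hdotEq)]
        rw [integral_finset_sum _ fun i _ => integrable_finset_sum _ fun j _ =>
          (hIntVij i j).const_mul (Φ i j)]
        refine Finset.sum_congr rfl fun i _ => ?_
        rw [integral_finset_sum _ fun j _ => (hIntVij i j).const_mul (Φ i j)]
        exact Finset.sum_congr rfl fun j _ => (integral_const_mul _ _).symm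
      have hlow : a * ∫ ω, vnorm ((prodGamma α (fun t => X t ω) (m' + 1) (m' + n)) *ᵥ u) ^ 2 ∂μ
          ≤ ∫ ω, ((prodGamma α (fun t => X t ω) (m' + 1) (m' + n)) *ᵥ u) ⬝ᵥ
              Φ *ᵥ ((prodGamma α (fun t => X t ω) (m' + 1) (m' + n)) *ᵥ u) ∂μ := by
        rw [← integral_const_mul]
        exact integral_mono ((hIntN m' n u).const_mul a) hIntΦV fun ω => hmin _
      have hIn : 0 ≤ ∫ ω, vnorm ((prodGamma α (fun t => X t ω) (m' + 1) (m' + n)) *ᵥ u) ^ 2 ∂μ :=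
        integral_nonneg fun ω => pow_nonneg (vnorm_nonneg' _) 2
      have h1e : (1 - α * a) ≤ Real.exp (-(α * a)) := by
        have := Real.add_one_le_exp (-(α * a)); linarith
      calc ∫ ω, vnorm ((prodGamma α (fun t => X t ω) (m' + 1) (m' + (n + 1))) *ᵥ u) ^ 2 ∂μ
          ≤ (∫ ω, vnorm ((prodGamma α (fun t => X t ω) (m' + 1) (m' + n)) *ᵥ u) ^ 2 ∂μ)
            - α * ∫ ω, (X (m' + n + 1) ω ⬝ᵥ ((prodGamma α (fun t => X t ω) (m' + 1) (m' + n)) *ᵥ u)) ^ 2 ∂μ := hstep1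
        _ ≤ (∫ ω, vnorm ((prodGamma α (fun t => X t ω) (m' + 1) (m' + n)) *ᵥ u) ^ 2 ∂μ)
            - α * (a * ∫ ω, vnorm ((prodGamma α (fun t => X t ω) (m' + 1) (m' + n)) *ᵥ u) ^ 2 ∂μ) := by
            rw [hs2, hΦV]
            have := mul_le_mul_of_nonneg_left hlow hα.le
            linarith
        _ = (1 - α * a) * ∫ ω, vnorm ((prodGamma α (fun t => X t ω) (m' + 1) (m' + n)) *ᵥ u) ^ 2 ∂μ := by
            ring
        _ ≤ Real.exp (-(α * a)) * ∫ ω, vnorm ((prodGamma α (fun t => X t ω) (m' + 1) (m' + n)) *ᵥ u) ^ 2 ∂μ :=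
            mul_le_mul_of_nonneg_right h1e hIn
        _ ≤ Real.exp (-(α * a)) * (Real.exp (-(α * a * n)) * vnorm u ^ 2) :=
            mul_le_mul_of_nonneg_left ih (Real.exp_nonneg _)
        _ = Real.exp (-(α * a * (n + 1 : ℕ))) * vnorm u ^ 2 := by
            rw [← mul_assoc, ← Real.exp_add]
            congr 2
            push_cast
            ring
  -- conclude
  intro m k hm hk u
  obtain ⟨m', rfl⟩ : ∃ m', m = m' + 1 := ⟨m - 1, by omega⟩
  obtain ⟨n, rfl⟩ : ∃ n, k = m' + n := ⟨k - m', by omega⟩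
  have hcount : m' + n - (m' + 1) + 1 = n := by omega
  rw [hcount]
  calc Real.sqrt (∫ ω, vnorm ((prodGamma α (fun i => X i ω) (m' + 1) (m' + n)).mulVec u) ^ 2 ∂μ)
      ≤ Real.sqrt (Real.exp (-(α * a * n)) * vnorm u ^ 2) := Real.sqrt_le_sqrt (key m' u n)
    _ = Real.exp (-(α * a * n) / 2) * vnorm u := by
        rw [Real.sqrt_mul (Real.exp_nonneg _), Real.sqrt_sq (vnorm_nonneg' u), ← Real.exp_half]
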